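/- Let ∇ ⊂ ℝ^d be a d-dimensional Gorenstein polytope of index r, and let m be the unique interior lattice point of r∇. Let n_1, …, n_r be affinely independent lattice points of ∇ and S := Conv(n_1, …, n_r). Then S is a special (r−1)-simplex of ∇ if and only if S is not contained in the boundary ∂∇; and in this case n_1 + ⋯ + n_r = m. -/

import Mathlib

open Pointwise

noncomputable section

/-- A point of `ℝ^n` all of whose coordinates are integers (a lattice point of `ℤ^n`). -/
def IsLatticePt {n : ℕ} (x : Fin n → ℝ) : Prop := ∀ k, ∃ m : ℤ, x k = (m : ℝ)

/-- A lattice polytope: the convex hull of finitely many lattice points. -/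
def IsLatticePoly {n : ℕ} (P : Set (Fin n → ℝ)) : Prop :=
  ∃ V : Finset (Fin n → ℝ), V.Nonempty ∧ (∀ v ∈ V, IsLatticePt v) ∧
    P = convexHull ℝ (V : Set (Fin n → ℝ))

/-- The standard inner product pairing on `ℝ^n`. -/
def pairR {n : ℕ} (x y : Fin n → ℝ) : ℝ := ∑ k, x k * y k

/-- The dual polytope `P* = {y : ⟨x,y⟩ ≥ -1 ∀ x ∈ P}`. -/
def dualPoly {n : ℕ} (P : Set (Fin n → ℝ)) : Set (Fin n → ℝ) :=
  {y | ∀ x ∈ P, -1 ≤ pairR x y}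

/-- A reflexive polytope: a lattice polytope with `0` in its interior whose dual
polytope is again a lattice polytope. -/
def IsReflexivePoly {n : ℕ} (P : Set (Fin n → ℝ)) : Prop :=
  IsLatticePoly P ∧ (0 : Fin n → ℝ) ∈ interior P ∧ IsLatticePoly (dualPoly P)

/-- The dimension of a polytope: the dimension of the direction of its affine span. -/
def polyDim {n : ℕ} (P : Set (Fin n → ℝ)) : ℕ :=
  Module.finrank ℝ (affineSpan ℝ P).direction

/-- A (full-dimensional) Gorenstein polytope of index `r`: `rP` has `m` as its unique
interior lattice point and `rP - m` is reflexive. -/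
def IsGorensteinPoly {n : ℕ} (P : Set (Fin n → ℝ)) (r : ℕ) (m : Fin n → ℝ) : Prop :=
  IsLatticePoly P ∧ IsLatticePt m ∧
  (∀ x, IsLatticePt x → (x ∈ interior ((r : ℝ) • P) ↔ x = m)) ∧
  IsReflexivePoly ((fun x => x - m) '' ((r : ℝ) • P))

/-- `y` is a point of the lattice dual to the (saturated) lattice `ℤ^n ∩ W` inside `W`. -/
def IsDualLatticePt {n : ℕ} (W : Submodule ℝ (Fin n → ℝ)) (y : Fin n → ℝ) : Prop :=
  y ∈ W ∧ ∀ x ∈ W, IsLatticePt x → ∃ m : ℤ, pairR x y = (m : ℝ)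

/-- Reflexivity of a (possibly lower-dimensional) lattice polytope inside its linear
span: `0` is in the relative interior and the dual polytope taken inside the linear
span is a lattice polytope with respect to the dual lattice. -/
def IsReflexiveIn {n : ℕ} (P : Set (Fin n → ℝ)) : Prop :=
  IsLatticePoly P ∧ (0 : Fin n → ℝ) ∈ intrinsicInterior ℝ P ∧
  ∃ V : Finset (Fin n → ℝ), V.Nonempty ∧
    (∀ v ∈ V, IsDualLatticePt (Submodule.span ℝ P) v) ∧
    {y | y ∈ Submodule.span ℝ P ∧ ∀ x ∈ P, -1 ≤ pairR x y} =
      convexHull ℝ (V : Set (Fin n → ℝ))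

/-- Gorenstein polytope of index `r` (possibly lower-dimensional): `rP` has `m` as its
unique relative-interior lattice point and `rP - m` is reflexive within its span. -/
def IsGorensteinIn {n : ℕ} (P : Set (Fin n → ℝ)) (r : ℕ) (m : Fin n → ℝ) : Prop :=
  IsLatticePoly P ∧ IsLatticePt m ∧
  (∀ x, IsLatticePt x → (x ∈ intrinsicInterior ℝ ((r : ℝ) • P) ↔ x = m)) ∧
  IsReflexiveIn ((fun x => x - m) '' ((r : ℝ) • P))

/-- The Minkowski sum `Δ 0 + ⋯ + Δ (r-1)` of a family of sets. -/
def minkSum {n r : ℕ} (Δ : Fin r → Set (Fin n → ℝ)) : Set (Fin n → ℝ) :=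
  {x | ∃ f : Fin r → (Fin n → ℝ), (∀ i, f i ∈ Δ i) ∧ x = ∑ i, f i}

/-- The Minkowski sum `Σ_{i ∈ I} Δ i`. -/
def minkSumOver {n r : ℕ} (I : Finset (Fin r)) (Δ : Fin r → Set (Fin n → ℝ)) :
    Set (Fin n → ℝ) :=
  {x | ∃ f : Fin r → (Fin n → ℝ), (∀ i ∈ I, f i ∈ Δ i) ∧ x = ∑ i ∈ I, f i}

/-- The point `x × e_i ∈ ℝ^d × ℝ^r`. -/
def cayleyPt {d r : ℕ} (x : Fin d → ℝ) (i : Fin r) : Fin (d + r) → ℝ :=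
  Fin.append x (fun j => if j = i then 1 else 0)

/-- The Cayley polytope `Δ 0 * ⋯ * Δ (r-1) ⊂ ℝ^d × ℝ^r`. -/
def cayley {d r : ℕ} (Δ : Fin r → Set (Fin d → ℝ)) : Set (Fin (d + r) → ℝ) :=
  convexHull ℝ (⋃ i, (fun x => cayleyPt x i) '' Δ i)

/-- `F` is a facet of `P`: a nonempty exposed face of dimension one less. -/
def IsFacetOf {n : ℕ} (F P : Set (Fin n → ℝ)) : Prop :=
  IsExposed ℝ P F ∧ F.Nonempty ∧ polyDim F + 1 = polyDim P

/-- A special `(r-1)`-simplex of `P`: `r` affinely independent lattice points of `P`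
such that every facet of `P` contains exactly `r - 1` of them. -/
def IsSpecialSimplex {n : ℕ} (P : Set (Fin n → ℝ)) (r : ℕ) (v : Fin r → Fin n → ℝ) : Prop :=
  (∀ i, IsLatticePt (v i) ∧ v i ∈ P) ∧ AffineIndependent ℝ v ∧
  ∀ F, IsFacetOf F P → ∃! i, v i ∉ F

/-- `∇_i = {y : ⟨x,y⟩ ≥ -δ_{ij} ∀ x ∈ Δ_j ∀ j}`, the polytopes of the dual nef-partition. -/
def nefDual {d r : ℕ} (Δ : Fin r → Set (Fin d → ℝ)) (i : Fin r) : Set (Fin d → ℝ) :=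
  {y | ∀ j, ∀ x ∈ Δ j, -(if i = j then (1 : ℝ) else 0) ≤ pairR x y}

/-- A centered nef-partition: lattice polytopes containing `0` whose Minkowski sum is a
reflexive polytope with `0` as its unique interior lattice point. -/
def IsCenteredNefPartition {d r : ℕ} (Δ : Fin r → Set (Fin d → ℝ)) : Prop :=
  (∀ i, IsLatticePoly (Δ i) ∧ (0 : Fin d → ℝ) ∈ Δ i) ∧
  IsReflexivePoly (minkSum Δ) ∧
  ∀ x, IsLatticePt x → x ∈ interior (minkSum Δ) → x = 0

/-- Two centered nef-partitions dual to each other. -/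
def AreDualNefPartitions {d r : ℕ} (Δ Nb : Fin r → Set (Fin d → ℝ)) : Prop :=
  IsCenteredNefPartition Δ ∧ IsCenteredNefPartition Nb ∧
  (∀ i, Nb i = nefDual Δ i) ∧ (∀ i, Δ i = nefDual Nb i)

/-- A Gorenstein cone with its distinguished lattice point `nσ`: a full-dimensional cone
generated by finitely many lattice points on the hyperplane `⟨·, nσ⟩ = 1`. -/
def IsGorensteinCone {n : ℕ} (σ : Set (Fin n → ℝ)) (nσ : Fin n → ℝ) : Prop :=
  IsLatticePt nσ ∧ Submodule.span ℝ σ = ⊤ ∧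
  ∃ V : Finset (Fin n → ℝ), V.Nonempty ∧
    (∀ v ∈ V, IsLatticePt v ∧ pairR v nσ = 1) ∧
    σ = {x | ∃ c : (Fin n → ℝ) → ℝ, (∀ v, 0 ≤ c v) ∧ x = ∑ v ∈ V, c v • v}

/-- The dual cone. -/
def dualCone {n : ℕ} (σ : Set (Fin n → ℝ)) : Set (Fin n → ℝ) :=
  {y | ∀ x ∈ σ, 0 ≤ pairR x y}

/-- Integrally closed lattice polytope: every lattice point of `k • P` is a sum of `k`
lattice points of `P`. -/
def IntegrallyClosed {n : ℕ} (P : Set (Fin n → ℝ)) : Prop :=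
  ∀ (k : ℕ) (x : Fin n → ℝ), IsLatticePt x → x ∈ (k : ℝ) • P →
    ∃ v : Fin k → (Fin n → ℝ), (∀ j, IsLatticePt (v j) ∧ v j ∈ P) ∧ x = ∑ j, v j

namespace SSAux

open Finset

variable {d : ℕ}

/-- the pairing as a linear map in the first argument -/
def pairLM (u : Fin d → ℝ) : (Fin d → ℝ) →ₗ[ℝ] ℝ where
  toFun x := pairR x u
  map_add' x y := by
    simp only [pairR, Pi.add_apply, add_mul, Finset.sum_add_distrib]
  map_smul' c x := by
    simp only [pairR, Pi.smul_apply, smul_eq_mul, RingHom.id_apply, Finset.mul_sum, mul_assoc]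

@[simp] lemma pairLM_apply (u x : Fin d → ℝ) : pairLM u x = pairR x u := rfl

lemma pairR_comm (x y : Fin d → ℝ) : pairR x y = pairR y x :=
  Finset.sum_congr rfl fun k _ => mul_comm _ _

def pairCLM (u : Fin d → ℝ) : (Fin d → ℝ) →L[ℝ] ℝ :=
  LinearMap.toContinuousLinearMap (pairLM u)

@[simp] lemma pairCLM_apply (u x : Fin d → ℝ) : pairCLM u x = pairR x u := rfl

lemma pairR_add_left (x y z : Fin d → ℝ) : pairR (x + y) z = pairR x z + pairR y z :=
  (pairLM z).map_add x y

lemma pairR_smul_left (c : ℝ) (x z : Fin d → ℝ) : pairR (c • x) z = c * pairR x z :=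
  (pairLM z).map_smul c x

lemma pairR_sub_left (x y z : Fin d → ℝ) : pairR (x - y) z = pairR x z - pairR y z :=
  (pairLM z).map_sub x y

lemma pairR_neg_left (x z : Fin d → ℝ) : pairR (-x) z = -pairR x z :=
  (pairLM z).map_neg x

@[simp] lemma pairR_zero_left (z : Fin d → ℝ) : pairR 0 z = 0 :=
  (pairLM z).map_zero

@[simp] lemma pairR_zero_right (z : Fin d → ℝ) : pairR z 0 = 0 := by
  rw [pairR_comm]; exact pairR_zero_left z

lemma pairR_sum_left {ι : Type*} (s : Finset ι) (f : ι → Fin d → ℝ) (z : Fin d → ℝ) :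
    pairR (∑ i ∈ s, f i) z = ∑ i ∈ s, pairR (f i) z :=
  map_sum (pairLM z) f s

lemma pairR_add_right (x y z : Fin d → ℝ) : pairR z (x + y) = pairR z x + pairR z y := by
  rw [pairR_comm, pairR_add_left, pairR_comm x z, pairR_comm y z]

lemma pairR_smul_right (c : ℝ) (x z : Fin d → ℝ) : pairR z (c • x) = c * pairR z x := by
  rw [pairR_comm, pairR_smul_left, pairR_comm]

lemma pairR_sub_right (x y z : Fin d → ℝ) : pairR z (x - y) = pairR z x - pairR z y := by
  rw [pairR_comm, pairR_sub_left, pairR_comm x z, pairR_comm y z]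

lemma pairR_sum_right {ι : Type*} (s : Finset ι) (f : ι → Fin d → ℝ) (z : Fin d → ℝ) :
    pairR z (∑ i ∈ s, f i) = ∑ i ∈ s, pairR z (f i) := by
  rw [pairR_comm, pairR_sum_left]
  exact Finset.sum_congr rfl fun i _ => pairR_comm _ _

lemma pairR_self_pos {x : Fin d → ℝ} (hx : x ≠ 0) : 0 < pairR x x := by
  have h1 : ∃ k, x k ≠ 0 := by
    by_contra h; push_neg at h; exact hx (funext h)
  obtain ⟨k, hk⟩ := h1
  have : ∀ j ∈ Finset.univ (α := Fin d), 0 ≤ x j * x j := fun j _ => mul_self_nonneg _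
  exact Finset.sum_pos' this ⟨k, Finset.mem_univ k, mul_self_pos.2 hk⟩

lemma pairR_self_ne_zero {x : Fin d → ℝ} (hx : x ≠ 0) : pairR x x ≠ 0 :=
  ne_of_gt (pairR_self_pos hx)

/-! ### Lattice point lemmas -/

lemma latt_sub {x y : Fin d → ℝ} (hx : IsLatticePt x) (hy : IsLatticePt y) :
    IsLatticePt (x - y) := by
  intro k
  obtain ⟨a, ha⟩ := hx k; obtain ⟨b, hb⟩ := hy k
  exact ⟨a - b, by simp [ha, hb]⟩

lemma latt_nat_smul (r : ℕ) {x : Fin d → ℝ} (hx : IsLatticePt x) :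
    IsLatticePt ((r : ℝ) • x) := by
  intro k
  obtain ⟨a, ha⟩ := hx k
  exact ⟨r * a, by push_cast; simp [ha]⟩

lemma latt_sum {r : ℕ} {v : Fin r → Fin d → ℝ} (h : ∀ i, IsLatticePt (v i)) :
    IsLatticePt (∑ i, v i) := by
  intro k
  choose a ha using fun i => h i k
  refine ⟨∑ i, a i, ?_⟩
  rw [Finset.sum_apply]
  push_cast
  exact Finset.sum_congr rfl fun i _ => ha i

lemma latt_pairR_int {x y : Fin d → ℝ} (hx : IsLatticePt x) (hy : IsLatticePt y) :
    ∃ k : ℤ, pairR x y = (k : ℝ) := by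
  choose a ha using hx
  choose b hb using hy
  refine ⟨∑ k, a k * b k, ?_⟩
  unfold pairR
  push_cast
  exact Finset.sum_congr rfl fun k _ => by rw [ha, hb]

/-! ### Interior of halfspaces -/

lemma isOpen_strict (u : Fin d → ℝ) : IsOpen {y : Fin d → ℝ | -1 < pairR y u} := by
  have : {y : Fin d → ℝ | -1 < pairR y u} = {y | (-1 : ℝ) < pairCLM u y} := by
    simp only [pairCLM_apply]
  rw [this]
  exact isOpen_lt continuous_const (pairCLM u).continuous

lemma interior_halfspace (u : Fin d → ℝ) :
    interior {y : Fin d → ℝ | -1 ≤ pairR y u} = {y | -1 < pairR y u} := by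
  apply Set.Subset.antisymm
  · intro y hy
    rcases eq_or_ne u 0 with rfl | hu
    · simp only [Set.mem_setOf_eq, pairR_zero_right]; norm_num
    · obtain ⟨ε, hε, hball⟩ := Metric.isOpen_iff.1 isOpen_interior y hy
      have hun : 0 < ‖u‖ := norm_pos_iff.2 hu
      set δ := ε / (2 * ‖u‖) with hδdef
      have hδ : 0 < δ := by positivity
      have hmem : y - δ • u ∈ interior {y : Fin d → ℝ | -1 ≤ pairR y u} := by
        apply hball
        rw [Metric.mem_ball, dist_eq_norm]
        have : y - δ • u - y = -(δ • u) := by abel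
        rw [this, norm_neg, norm_smul, Real.norm_eq_abs, abs_of_pos hδ, hδdef]
        have heq : ε / (2 * ‖u‖) * ‖u‖ = ε / 2 := by field_simp
        rw [heq]; linarith
      have h1' : y - δ • u ∈ {y : Fin d → ℝ | -1 ≤ pairR y u} := interior_subset hmem
      have h1 : -1 ≤ pairR (y - δ • u) u := h1'
      rw [pairR_sub_left, pairR_smul_left] at h1
      have h2 : 0 < δ * pairR u u := mul_pos hδ (pairR_self_pos hu)
      simp only [Set.mem_setOf_eq]
      linarith
  · exact interior_maximal (Set.setOf_subset_setOf.2 fun y hy => le_of_lt hy) (isOpen_strict u)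

lemma interior_halfspaces (U : Finset (Fin d → ℝ)) :
    interior {y : Fin d → ℝ | ∀ u ∈ U, -1 ≤ pairR y u} = {y | ∀ u ∈ U, -1 < pairR y u} := by
  have h1 : {y : Fin d → ℝ | ∀ u ∈ U, -1 ≤ pairR y u} =
      ⋂ u ∈ (U : Set (Fin d → ℝ)), {y | -1 ≤ pairR y u} := by
    ext y; simp
  rw [h1, (U.finite_toSet).interior_biInter]
  ext y
  simp only [Set.mem_iInter, Set.mem_setOf_eq, interior_halfspace, Finset.mem_coe]

/-! ### representation of continuous linear functionals, bipolar -/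

lemma clm_exists_vec (l : (Fin d → ℝ) →L[ℝ] ℝ) : ∃ w, ∀ x, l x = pairR x w := by
  refine ⟨fun k => l (Pi.single k 1), fun x => ?_⟩
  have hx : x = ∑ k, x k • (Pi.single k (1 : ℝ) : Fin d → ℝ) := by
    funext j
    rw [Finset.sum_apply]
    simp [Pi.single_apply]
  calc l x = l (∑ k, x k • (Pi.single k (1 : ℝ) : Fin d → ℝ)) := by rw [← hx]
    _ = ∑ k, x k * l (Pi.single k 1) := by rw [map_sum]; simp
    _ = pairR x (fun k => l (Pi.single k 1)) := rfl

lemma bipolar {P : Set (Fin d → ℝ)} (hP : Convex ℝ P) (hPc : IsClosed P)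
    (h0 : (0 : Fin d → ℝ) ∈ P) {x : Fin d → ℝ}
    (hx : ∀ y ∈ dualPoly P, -1 ≤ pairR x y) : x ∈ P := by
  by_contra hxP
  obtain ⟨l, u, hl, hu⟩ := geometric_hahn_banach_closed_point hP hPc hxP
  obtain ⟨w, hw⟩ := clm_exists_vec l
  have h0u : 0 < u := by
    have := hl 0 h0
    rwa [map_zero] at this
  have hy : (-u⁻¹) • w ∈ dualPoly P := by
    intro a ha
    have h1 : l a < u := hl a ha
    rw [hw] at h1
    rw [pairR_smul_right]
    have h2 : pairR a w * u⁻¹ ≤ 1 := by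
      rw [← div_eq_mul_inv, div_le_one h0u]; exact le_of_lt h1
    nlinarith
  have h2 := hx _ hy
  rw [pairR_smul_right] at h2
  rw [hw] at hu
  have h3 : pairR x w * u⁻¹ > 1 := by
    rw [← div_eq_mul_inv, gt_iff_lt, lt_div_iff₀ h0u, one_mul]; exact hu
  nlinarith

end SSAux
namespace SSAux

variable {d : ℕ}

/-! ### orthogonal vectors -/

lemma exists_pair_orth (B : Submodule ℝ (Fin d → ℝ)) (h : Module.finrank ℝ B < d) :
    ∃ z : Fin d → ℝ, z ≠ 0 ∧ ∀ b ∈ B, pairR b z = 0 := by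
  let φ : (Fin d → ℝ) →ₗ[ℝ] Module.Dual ℝ B :=
    { toFun := fun z => (pairLM z).comp B.subtype
      map_add' := fun z z' => by
        ext b
        simp only [LinearMap.comp_apply, LinearMap.add_apply, pairLM_apply, Submodule.coe_subtype]
        rw [pairR_add_right]
      map_smul' := fun c z => by
        ext b
        simp only [LinearMap.comp_apply, LinearMap.smul_apply, pairLM_apply, RingHom.id_apply,
          Submodule.coe_subtype, smul_eq_mul]
        rw [pairR_smul_right] }
  have hk : LinearMap.ker φ ≠ ⊥ := by
    intro hbot
    have h1 := φ.finrank_range_add_finrank_ker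
    rw [hbot, finrank_bot, add_zero, Module.finrank_fintype_fun_eq_card, Fintype.card_fin] at h1
    have h2 : Module.finrank ℝ (LinearMap.range φ) ≤ Module.finrank ℝ (Module.Dual ℝ B) :=
      (LinearMap.range φ).finrank_le
    rw [Subspace.dual_finrank_eq] at h2
    omega
  obtain ⟨z, hz, hz0⟩ := Submodule.exists_mem_ne_zero_of_ne_bot hk
  refine ⟨z, hz0, fun b hb => ?_⟩
  have h3 := LinearMap.congr_fun (LinearMap.mem_ker.1 hz) ⟨b, hb⟩
  simpa [φ, pairR_comm] using h3

/-! ### hyperplanes -/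

lemma pairLM_range {u : Fin d → ℝ} (hu : u ≠ 0) : LinearMap.range (pairLM u) = ⊤ := by
  rw [LinearMap.range_eq_top]
  intro t
  refine ⟨(t / pairR u u) • u, ?_⟩
  rw [pairLM_apply, pairR_smul_left, div_mul_cancel₀ _ (pairR_self_ne_zero hu)]

lemma finrank_ker_pairLM {u : Fin d → ℝ} (hu : u ≠ 0) :
    Module.finrank ℝ (LinearMap.ker (pairLM u)) + 1 = d := by
  have h := (pairLM u).finrank_range_add_finrank_ker
  rw [pairLM_range hu, finrank_top, Module.finrank_self,
    Module.finrank_fintype_fun_eq_card, Fintype.card_fin] at h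
  omega

lemma affspan_of_tight {F : Set (Fin d → ℝ)} {u y₀ : Fin d → ℝ} (hy₀ : y₀ ∈ F)
    (hF : ∀ y ∈ F, pairR y u = -1)
    (hdim : polyDim F + 1 = d) :
    {y : Fin d → ℝ | pairR y u = -1} = (affineSpan ℝ F : Set (Fin d → ℝ)) := by
  have hu : u ≠ 0 := by
    intro h
    have := hF y₀ hy₀
    rw [h, pairR_zero_right] at this
    norm_num at this
  set K := LinearMap.ker (pairLM u) with hK
  set A := AffineSubspace.mk' y₀ K with hA
  have hcar : (A : Set (Fin d → ℝ)) = {y | pairR y u = -1} := by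
    ext y
    rw [hA, SetLike.mem_coe, AffineSubspace.mem_mk']
    have : (y -ᵥ y₀ : Fin d → ℝ) = y - y₀ := rfl
    rw [this, hK, LinearMap.mem_ker, pairLM_apply, pairR_sub_left, hF y₀ hy₀]
    constructor
    · intro h; simp only [Set.mem_setOf_eq]; linarith
    · intro h; simp only [Set.mem_setOf_eq] at h; rw [h]; ring
  have hle : affineSpan ℝ F ≤ A := by
    apply affineSpan_le.2
    intro y hy
    rw [hcar]
    exact hF y hy
  have hdir : (affineSpan ℝ F).direction = K := by
    apply Submodule.eq_of_le_of_finrank_eq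
    · have := AffineSubspace.direction_le hle
      rwa [hA, AffineSubspace.direction_mk'] at this
    · have h1 := finrank_ker_pairLM hu
      rw [← hK] at h1
      unfold polyDim at hdim
      omega
  have hAeq : affineSpan ℝ F = A :=
    AffineSubspace.ext_of_direction_eq (by rw [hdir, hA, AffineSubspace.direction_mk'])
      ⟨y₀, mem_affineSpan ℝ hy₀, AffineSubspace.self_mem_mk' _ _⟩
  rw [hAeq, hcar]

lemma hyperplane_unique {a b x₀ : Fin d → ℝ} (hx₀ : pairR x₀ a = -1)
    (h : {y : Fin d → ℝ | pairR y a = -1} = {y | pairR y b = -1}) : a = b := by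
  have ha : a ≠ 0 := by
    intro h0; rw [h0, pairR_zero_right] at hx₀; norm_num at hx₀
  have hx₀b : pairR x₀ b = -1 := by
    have : x₀ ∈ {y : Fin d → ℝ | pairR y a = -1} := hx₀
    rw [h] at this; exact this
  have horth : ∀ z, pairR z a = 0 → pairR z b = 0 := by
    intro z hz
    have h1 : x₀ + z ∈ {y : Fin d → ℝ | pairR y a = -1} := by
      simp only [Set.mem_setOf_eq, pairR_add_left, hx₀, hz, add_zero]
    rw [h] at h1
    have h2 : pairR (x₀ + z) b = -1 := h1
    rw [pairR_add_left, hx₀b] at h2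
    linarith
  set μ := pairR b a / pairR a a with hμ
  set z := b - μ • a with hz
  have hza : pairR z a = 0 := by
    rw [hz, pairR_sub_left, pairR_smul_left, hμ, div_mul_cancel₀ _ (pairR_self_ne_zero ha)]
    ring
  have hzb := horth z hza
  have hzz : pairR z z = 0 := by
    have h2 : pairR z z = pairR z b - μ * pairR z a := by
      calc pairR z z = pairR z (b - μ • a) := by rw [← hz]
        _ = pairR z b - μ * pairR z a := by rw [pairR_sub_right, pairR_smul_right]
    rw [h2, hzb, hza]; ring
  have hz0 : z = 0 := by
    by_contra h'
    exact pairR_self_ne_zero h' hzz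
  have hb : b = μ • a := by
    rw [hz, sub_eq_zero] at hz0; exact hz0
  have hμ1 : μ = 1 := by
    have h1 : pairR x₀ b = μ * pairR x₀ a := by rw [hb, pairR_smul_right]
    rw [hx₀b, hx₀] at h1
    linarith
  rw [hb, hμ1, one_smul]

end SSAux
namespace SSAux

variable {d : ℕ}

/-! ### exposed faces and tight sets -/

lemma tight_isExposed {P : Set (Fin d → ℝ)} {u : Fin d → ℝ}
    (hall : ∀ y ∈ P, -1 ≤ pairR y u) {y₀ : Fin d → ℝ} (hy₀P : y₀ ∈ P)
    (hy₀ : pairR y₀ u = -1) :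
    IsExposed ℝ P {y ∈ P | pairR y u = -1} := by
  intro _
  refine ⟨-(pairCLM u), ?_⟩
  ext x
  simp only [Set.mem_setOf_eq, ContinuousLinearMap.neg_apply, pairCLM_apply]
  constructor
  · rintro ⟨hxP, hx⟩
    refine ⟨hxP, fun y hy => ?_⟩
    have := hall y hy
    rw [hx]
    linarith
  · rintro ⟨hxP, hmax⟩
    refine ⟨hxP, le_antisymm ?_ (hall x hxP)⟩
    have := hmax y₀ hy₀P
    rw [hy₀] at this
    linarith

lemma exposed_normalize {P G : Set (Fin d → ℝ)}
    (h0 : (0 : Fin d → ℝ) ∈ interior P) (hGP : G ≠ P) (hexp : IsExposed ℝ P G)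
    (hne : G.Nonempty) :
    ∃ u₀ ∈ dualPoly P, G = {y ∈ P | pairR y u₀ = -1} := by
  obtain ⟨l, hl⟩ := hexp hne
  obtain ⟨w, hw⟩ := clm_exists_vec l
  obtain ⟨y₀, hy₀⟩ := hne
  have hy₀' : y₀ ∈ P ∧ ∀ y ∈ P, l y ≤ l y₀ := by rw [hl] at hy₀; exact hy₀
  set c := l y₀ with hc
  have hmax : ∀ y ∈ P, l y ≤ c := hy₀'.2
  have hGc : G = {y ∈ P | l y = c} := by
    rw [hl]
    ext x
    constructor
    · rintro ⟨hxP, hm⟩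
      exact ⟨hxP, le_antisymm (hmax x hxP) (hm y₀ hy₀'.1)⟩
    · rintro ⟨hxP, he⟩
      exact ⟨hxP, fun y hy => he ▸ hmax y hy⟩
  have hw0 : w ≠ 0 := by
    rintro rfl
    apply hGP
    have hl0 : ∀ x, l x = 0 := fun x => by rw [hw x, pairR_zero_right]
    have hc0 : c = 0 := by rw [hc, hl0]
    rw [hGc, hc0]
    ext x; simp [hl0]
  have h0P : (0 : Fin d → ℝ) ∈ P := interior_subset h0
  have hcpos : 0 < c := by
    rcases lt_or_ge 0 c with h | h
    · exact h
    exfalso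
    have hc0 : c = 0 := le_antisymm h (by simpa using hmax 0 h0P)
    obtain ⟨ε, hε, hball⟩ := Metric.isOpen_iff.1 isOpen_interior 0 h0
    have hwn : 0 < ‖w‖ := norm_pos_iff.2 hw0
    set δ := ε / (2 * ‖w‖) with hδdef
    have hδ : 0 < δ := by positivity
    have hmem : δ • w ∈ P := by
      apply interior_subset
      apply hball
      rw [Metric.mem_ball, dist_zero_right, norm_smul, Real.norm_eq_abs, abs_of_pos hδ, hδdef]
      have heq : ε / (2 * ‖w‖) * ‖w‖ = ε / 2 := by field_simp
      rw [heq]; linarith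
    have h1 := hmax _ hmem
    rw [hw, pairR_smul_left, hc0] at h1
    nlinarith [pairR_self_pos hw0, hδ]
  refine ⟨(-c⁻¹) • w, ?_, ?_⟩
  · intro x hxP
    rw [pairR_smul_right]
    have h1 : pairR x w ≤ c := by rw [← hw]; exact hmax x hxP
    have h2 : pairR x w * c⁻¹ ≤ 1 := by
      rw [← div_eq_mul_inv, div_le_one hcpos]; exact h1
    nlinarith
  · rw [hGc]
    ext x
    simp only [Set.mem_setOf_eq]
    constructor
    · rintro ⟨hxP, he⟩
      refine ⟨hxP, ?_⟩
      rw [pairR_smul_right, ← hw, he]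
      field_simp
    · rintro ⟨hxP, he⟩
      refine ⟨hxP, ?_⟩
      rw [pairR_smul_right, ← hw] at he
      have hcne : c ≠ 0 := ne_of_gt hcpos
      have h6 : (-c⁻¹) * l x = (-c⁻¹) * c := by
        rw [he, neg_mul, inv_mul_cancel₀ hcne]
      exact mul_left_cancel₀ (neg_ne_zero.2 (inv_ne_zero hcne)) h6

lemma tight_transfer {P : Set (Fin d → ℝ)} {U : Finset (Fin d → ℝ)}
    (hU : ∀ u ∈ U, u ∈ dualPoly P) {u₀ : Fin d → ℝ}
    (hu₀ : u₀ ∈ convexHull ℝ (U : Set (Fin d → ℝ))) :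
    ∃ u ∈ U, ∀ y ∈ P, pairR y u₀ = -1 → pairR y u = -1 := by
  obtain ⟨μ, hμ0, hμ1, hμc⟩ := Finset.mem_convexHull'.1 hu₀
  obtain ⟨us, husU, huspos⟩ : ∃ u ∈ U, 0 < μ u := by
    by_contra h
    push_neg at h
    have : ∑ u ∈ U, μ u = 0 :=
      Finset.sum_eq_zero fun u hu => le_antisymm (h u hu) (hμ0 u hu)
    rw [hμ1] at this
    norm_num at this
  refine ⟨us, husU, fun y hyP hy => ?_⟩
  have hsum : ∑ u ∈ U, μ u * (pairR y u + 1) = 0 := by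
    have h1 : pairR y u₀ = ∑ u ∈ U, μ u * pairR y u := by
      rw [← hμc, pairR_sum_right]
      exact Finset.sum_congr rfl fun u _ => pairR_smul_right _ _ _
    have h2 : ∑ u ∈ U, μ u * (pairR y u + 1) = (∑ u ∈ U, μ u * pairR y u) + ∑ u ∈ U, μ u := by
      rw [← Finset.sum_add_distrib]
      exact Finset.sum_congr rfl fun u _ => by ring
    rw [h2, ← h1, hy, hμ1]
    ring
  have hterm := (Finset.sum_eq_zero_iff_of_nonneg fun u hu =>
    mul_nonneg (hμ0 u hu) (by linarith [hU u hu y hyP])).1 hsum us husU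
  rcases mul_eq_zero.1 hterm with h | h
  · exact absurd h (ne_of_gt huspos)
  · linarith

lemma facet_has_lattice_normal {P : Set (Fin d → ℝ)} {U : Finset (Fin d → ℝ)}
    (hdual : dualPoly P = convexHull ℝ (U : Set (Fin d → ℝ)))
    (h0 : (0 : Fin d → ℝ) ∈ interior P)
    {F : Set (Fin d → ℝ)} (hexp : IsExposed ℝ P F) (hne : F.Nonempty)
    (hdim : polyDim F + 1 = d) (hdimP : polyDim P = d) :
    ∃ u ∈ U, F = {y ∈ P | pairR y u = -1} := by
  have hFP : F ≠ P := by
    intro h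
    rw [h, hdimP] at hdim
    omega
  obtain ⟨u₀, hu₀D, hFeq⟩ := exposed_normalize h0 hFP hexp hne
  have hu₀U : u₀ ∈ convexHull ℝ (U : Set (Fin d → ℝ)) := hdual ▸ hu₀D
  obtain ⟨us, husU, htr⟩ :=
    tight_transfer (fun u hu => hdual ▸ subset_convexHull ℝ _ hu) hu₀U
  obtain ⟨y₀, hy₀⟩ := hne
  have hy₀' : y₀ ∈ P ∧ pairR y₀ u₀ = -1 := by rw [hFeq] at hy₀; exact hy₀
  have hF1 : ∀ y ∈ F, pairR y u₀ = -1 := fun y hy => by rw [hFeq] at hy; exact hy.2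
  have hF2 : ∀ y ∈ F, pairR y us = -1 := fun y hy => by
    have hyP : y ∈ P := by rw [hFeq] at hy; exact hy.1
    exact htr y hyP (hF1 y hy)
  have h1 := affspan_of_tight hy₀ hF1 hdim
  have h2 := affspan_of_tight hy₀ hF2 hdim
  have heq : u₀ = us := hyperplane_unique hy₀'.2 (h1.trans h2.symm)
  exact ⟨us, husU, by rw [hFeq, heq]⟩

end SSAux
namespace SSAux

variable {d : ℕ}

/-! ### every proper exposed face is contained in a facet -/

lemma exposed_subset_facet {P : Set (Fin d → ℝ)} {W U : Finset (Fin d → ℝ)}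
    (hP : P = convexHull ℝ (W : Set (Fin d → ℝ)))
    (hdual : dualPoly P = convexHull ℝ (U : Set (Fin d → ℝ)))
    (h0 : (0 : Fin d → ℝ) ∈ interior P) (hdimP : polyDim P = d)
    {G : Set (Fin d → ℝ)} (hexp : IsExposed ℝ P G) (hne : G.Nonempty) (hGP : G ≠ P) :
    ∃ F, IsFacetOf F P ∧ G ⊆ F := by
  classical
  set D := dualPoly P with hD
  have hDconv : Convex ℝ D := hdual ▸ convex_convexHull ℝ _
  have hDcomp : IsCompact D := hdual ▸ U.finite_toSet.isCompact_convexHull ℝ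
  have hextU : D.extremePoints ℝ ⊆ U := by
    rw [hdual]; exact extremePoints_convexHull_subset
  set U' : Finset (Fin d → ℝ) := U.filter (fun u => u ∈ D.extremePoints ℝ) with hU'def
  have hU' : (U' : Set (Fin d → ℝ)) = D.extremePoints ℝ := by
    ext u
    simp only [hU'def, Finset.coe_filter, Set.mem_setOf_eq, Finset.mem_coe]
    exact ⟨fun h => h.2, fun h => ⟨hextU h, h⟩⟩
  have hDU' : D = convexHull ℝ (U' : Set (Fin d → ℝ)) := by
    have hcl : IsClosed (convexHull ℝ (U' : Set (Fin d → ℝ))) :=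
      (U'.finite_toSet.isCompact_convexHull ℝ).isClosed
    have h1 : closure (convexHull ℝ (D.extremePoints ℝ)) = D :=
      closure_convexHull_extremePoints hDcomp hDconv
    rw [← hU', hcl.closure_eq] at h1
    exact h1.symm
  obtain ⟨u₀, hu₀D, hGeq⟩ := exposed_normalize h0 hGP hexp hne
  have hu₀U' : u₀ ∈ convexHull ℝ (U' : Set (Fin d → ℝ)) := by
    have h2 : u₀ ∈ D := hu₀D
    rwa [hDU'] at h2
  obtain ⟨w, hwU', htr⟩ :=
    tight_transfer (U := U') (fun u hu => by
      have h3 : u ∈ D := by rw [hDU']; exact subset_convexHull ℝ _ hu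
      exact h3) hu₀U'
  have hwD : w ∈ D := by rw [hDU']; exact subset_convexHull ℝ _ hwU'
  set Fw : Set (Fin d → ℝ) := {y ∈ P | pairR y w = -1} with hFw
  have hGF : G ⊆ Fw := by
    intro y hy
    have hy' : y ∈ P ∧ pairR y u₀ = -1 := by rw [hGeq] at hy; exact hy
    exact ⟨hy'.1, htr y hy'.1 hy'.2⟩
  obtain ⟨y₀, hy₀G⟩ := hne
  have hy₀F : y₀ ∈ Fw := hGF hy₀G
  have hallw : ∀ y ∈ P, -1 ≤ pairR y w := fun y hy => hwD y hy
  have hexpF : IsExposed ℝ P Fw := tight_isExposed hallw hy₀F.1 hy₀F.2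
  have hw0 : w ≠ 0 := by
    intro h
    have := hy₀F.2
    rw [h, pairR_zero_right] at this
    norm_num at this
  have hWP : (W : Set (Fin d → ℝ)) ⊆ P := hP ▸ subset_convexHull ℝ _
  -- upper bound for the dimension
  have hA : affineSpan ℝ Fw ≤ AffineSubspace.mk' y₀ (LinearMap.ker (pairLM w)) := by
    apply affineSpan_le.2
    intro y hy
    rw [SetLike.mem_coe, AffineSubspace.mem_mk']
    have hvs : (y -ᵥ y₀ : Fin d → ℝ) = y - y₀ := rfl
    rw [hvs, LinearMap.mem_ker, pairLM_apply, pairR_sub_left, hy.2, hy₀F.2]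
    ring
  have hdimle : polyDim Fw + 1 ≤ d := by
    have h1 := AffineSubspace.direction_le hA
    rw [AffineSubspace.direction_mk'] at h1
    have h2 := Submodule.finrank_mono h1
    have h3 := finrank_ker_pairLM hw0
    unfold polyDim
    omega
  -- lower bound for the dimension
  have hdimge : d ≤ polyDim Fw + 1 := by
    by_contra hlt
    push_neg at hlt
    set B := Submodule.span ℝ Fw with hB
    have hBlt : Module.finrank ℝ B < d := by
      have h1 : B ≤ (affineSpan ℝ Fw).direction ⊔ Submodule.span ℝ {y₀} := by
        rw [hB, Submodule.span_le]
        intro y hy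
        have hmem1 : y ∈ affineSpan ℝ Fw := mem_affineSpan ℝ hy
        have hmem0 : y₀ ∈ affineSpan ℝ Fw := mem_affineSpan ℝ hy₀F
        have hd1 : y - y₀ ∈ (affineSpan ℝ Fw).direction := by
          have := AffineSubspace.vsub_mem_direction hmem1 hmem0
          exact this
        have hyeq : y = (y - y₀) + y₀ := by abel
        rw [SetLike.mem_coe, hyeq]
        exact Submodule.add_mem _ (Submodule.mem_sup_left hd1)
          (Submodule.mem_sup_right (Submodule.mem_span_singleton_self y₀))
      have h2 := Submodule.finrank_mono h1
      have h3 : Module.finrank ℝ ((affineSpan ℝ Fw).direction ⊔ Submodule.span ℝ {y₀} :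
          Submodule ℝ (Fin d → ℝ)) ≤ polyDim Fw + 1 := by
        have h4 := Submodule.finrank_sup_add_finrank_inf_eq
          (affineSpan ℝ Fw).direction (Submodule.span ℝ {y₀})
        have h5 : Module.finrank ℝ (Submodule.span ℝ ({y₀} : Set (Fin d → ℝ))) ≤ 1 := by
          rcases eq_or_ne y₀ 0 with rfl | hy0
          · rw [Submodule.span_zero_singleton]
            simp
          · rw [finrank_span_singleton hy0]
        unfold polyDim
        omega
      omega
    obtain ⟨z, hz0, hzB⟩ := exists_pair_orth B hBlt
    have hzF : ∀ y ∈ Fw, pairR y z = 0 := fun y hy => hzB y (Submodule.subset_span hy)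
    set W' := W.filter (fun x => pairR x w ≠ -1) with hW'def
    obtain ⟨ε, hε, hεbound⟩ : ∃ ε > (0:ℝ), ∀ x ∈ W', ε * |pairR x z| < pairR x w + 1 := by
      rcases W'.eq_empty_or_nonempty with hWe | hWne
      · refine ⟨1, one_pos, ?_⟩
        intro x hx
        rw [hWe] at hx
        exact absurd hx (Finset.notMem_empty x)
      · set g := fun x => (pairR x w + 1) / (|pairR x z| + 1) with hg
        refine ⟨W'.inf' hWne g, ?_, ?_⟩
        · show (0:ℝ) < W'.inf' hWne g
          rw [Finset.lt_inf'_iff]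
          intro x hx
          have hxW : x ∈ W := (Finset.mem_filter.1 hx).1
          have hxne : pairR x w ≠ -1 := (Finset.mem_filter.1 hx).2
          have hxlb := hallw x (hWP hxW)
          have hxpos : 0 < pairR x w + 1 := by
            rcases lt_or_eq_of_le hxlb with h | h
            · linarith
            · exact absurd h.symm hxne
          apply div_pos hxpos
          positivity
        · intro x hx
          have hg1 : W'.inf' hWne g ≤ g x := Finset.inf'_le _ hx
          have hxW : x ∈ W := (Finset.mem_filter.1 hx).1
          have hxne : pairR x w ≠ -1 := (Finset.mem_filter.1 hx).2
          have hxlb := hallw x (hWP hxW)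
          have hxpos : 0 < pairR x w + 1 := by
            rcases lt_or_eq_of_le hxlb with h | h
            · linarith
            · exact absurd h.symm hxne
          have habs : (0:ℝ) < |pairR x z| + 1 := by positivity
          have hεpos : 0 < W'.inf' hWne g := by
            rw [Finset.lt_inf'_iff]
            intro x' hx'
            have hx'W : x' ∈ W := (Finset.mem_filter.1 hx').1
            have hx'ne : pairR x' w ≠ -1 := (Finset.mem_filter.1 hx').2
            have hx'lb := hallw x' (hWP hx'W)
            have : 0 < pairR x' w + 1 := by
              rcases lt_or_eq_of_le hx'lb with h | h
              · linarith
              · exact absurd h.symm hx'ne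
            apply div_pos this
            positivity
          calc W'.inf' hWne g * |pairR x z| < W'.inf' hWne g * (|pairR x z| + 1) := by
                nlinarith
            _ ≤ g x * (|pairR x z| + 1) := mul_le_mul_of_nonneg_right hg1 (le_of_lt habs)
            _ = pairR x w + 1 := by rw [hg]; field_simp
    have key : ∀ s : ℝ, |s| ≤ ε → w + s • z ∈ D := by
      intro s hs
      intro x hxP
      rw [hP] at hxP
      have hhalf : Convex ℝ {x : Fin d → ℝ | -1 ≤ pairR x (w + s • z)} := by
        have : {x : Fin d → ℝ | -1 ≤ pairR x (w + s • z)} =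
            {x | -1 ≤ pairLM (w + s • z) x} := rfl
        rw [this]
        exact convex_halfSpace_ge (pairLM (w + s • z)).isLinear (-1)
      have hsub : (W : Set (Fin d → ℝ)) ⊆ {x : Fin d → ℝ | -1 ≤ pairR x (w + s • z)} := by
        intro x' hx'W
        simp only [Set.mem_setOf_eq]
        rw [pairR_add_right, pairR_smul_right]
        by_cases hxt : pairR x' w = -1
        · have hx'F : x' ∈ Fw := ⟨hWP hx'W, hxt⟩
          rw [hzF x' hx'F, mul_zero, add_zero, hxt]
        · have hx'W' : x' ∈ W' := Finset.mem_filter.2 ⟨hx'W, hxt⟩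
          have hb := hεbound x' hx'W'
          have habs : |s * pairR x' z| ≤ ε * |pairR x' z| := by
            rw [abs_mul]
            exact mul_le_mul_of_nonneg_right hs (abs_nonneg _)
          have h1 := neg_abs_le (s * pairR x' z)
          linarith
      exact convexHull_min hsub hhalf hxP
    have hwext : w ∈ D.extremePoints ℝ := (Finset.mem_filter.1 hwU').2
    have hplus : w + ε • z ∈ D := key ε (by rw [abs_of_pos hε])
    have hminus : w + (-ε) • z ∈ D := key (-ε) (by rw [abs_neg, abs_of_pos hε])
    have hmid : w ∈ openSegment ℝ (w + (-ε) • z) (w + ε • z) := by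
      refine ⟨1/2, 1/2, by norm_num, by norm_num, by norm_num, ?_⟩
      rw [smul_add, smul_add, smul_smul, smul_smul]
      have h1 : (1/2 : ℝ) * (-ε) = -(ε/2) := by ring
      have h2 : (1/2 : ℝ) * ε = ε/2 := by ring
      rw [h1, h2]
      rw [neg_smul]
      have : (1/2 : ℝ) • w + -((ε/2) • z) + ((1/2 : ℝ) • w + (ε/2) • z) =
          ((1/2 : ℝ) + (1/2 : ℝ)) • w + (-((ε/2) • z) + (ε/2) • z) := by
        rw [add_smul]; abel
      rw [this]
      norm_num
    have hcontra := (hwext.2 hminus hplus hmid)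
    have : (-ε) • z = 0 := by
      have h1 : w + (-ε) • z = w + 0 := by rw [add_zero]; exact hcontra
      exact add_left_cancel h1
    rw [smul_eq_zero] at this
    rcases this with h | h
    · exact absurd h (by simpa using ne_of_gt hε)
    · exact hz0 h
  refine ⟨Fw, ⟨hexpF, ⟨y₀, hy₀F⟩, ?_⟩, hGF⟩
  rw [hdimP]
  omega

end SSAux
namespace SSAux

variable {d : ℕ}

/-! ### affine images -/

lemma image_exposed {c : ℝ} (hc : 0 < c) (b : Fin d → ℝ) {P F : Set (Fin d → ℝ)}
    (h : IsExposed ℝ P F) :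
    IsExposed ℝ ((fun x => c • x + b) '' P) ((fun x => c • x + b) '' F) := by
  intro hne
  have hFne : F.Nonempty := hne.of_image
  obtain ⟨l, hl⟩ := h hFne
  refine ⟨l, ?_⟩
  ext y
  simp only [Set.mem_image, Set.mem_setOf_eq]
  constructor
  · rintro ⟨x, hxF, rfl⟩
    have hx : x ∈ P ∧ ∀ y ∈ P, l y ≤ l x := by rw [hl] at hxF; exact hxF
    refine ⟨⟨x, hx.1, rfl⟩, ?_⟩
    rintro y' ⟨x', hx'P, rfl⟩
    have h1 := hx.2 x' hx'P
    simp only [map_add, map_smul, smul_eq_mul]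
    nlinarith
  · rintro ⟨⟨x, hxP, rfl⟩, hmax⟩
    refine ⟨x, ?_, rfl⟩
    rw [hl]
    refine ⟨hxP, fun x' hx' => ?_⟩
    have h1 := hmax (c • x' + b) ⟨x', hx', rfl⟩
    simp only [map_add, map_smul, smul_eq_mul] at h1
    nlinarith

lemma polyDim_image {c : ℝ} (hc : c ≠ 0) (b : Fin d → ℝ) (S : Set (Fin d → ℝ)) :
    polyDim ((fun x => c • x + b) '' S) = polyDim S := by
  unfold polyDim
  rw [direction_affineSpan, direction_affineSpan]
  have himg : ((fun x => c • x + b) '' S) -ᵥ ((fun x => c • x + b) '' S) = c • (S -ᵥ S) := by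
    ext z
    constructor
    · rintro ⟨z₁, ⟨x, hx, rfl⟩, z₂, ⟨y, hy, rfl⟩, rfl⟩
      refine ⟨x - y, ⟨x, hx, y, hy, rfl⟩, ?_⟩
      show c • (x - y) = (c • x + b) -ᵥ (c • y + b)
      show c • (x - y) = (c • x + b) - (c • y + b)
      rw [smul_sub]
      abel
    · rintro ⟨z', ⟨x, hx, y, hy, rfl⟩, rfl⟩
      refine ⟨c • x + b, ⟨x, hx, rfl⟩, c • y + b, ⟨y, hy, rfl⟩, ?_⟩
      show (c • x + b) - (c • y + b) = c • (x -ᵥ y)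
      show (c • x + b) - (c • y + b) = c • (x - y)
      rw [smul_sub]
      abel
  show Module.finrank ℝ (Submodule.span ℝ (((fun x => c • x + b) '' S) -ᵥ
    ((fun x => c • x + b) '' S))) = Module.finrank ℝ (Submodule.span ℝ (S -ᵥ S))
  rw [himg, Submodule.span_smul_eq_of_isUnit _ c (isUnit_iff_ne_zero.2 hc)]

lemma image_facet {c : ℝ} (hc : 0 < c) (b : Fin d → ℝ) {F P : Set (Fin d → ℝ)}
    (h : IsFacetOf F P) :
    IsFacetOf ((fun x => c • x + b) '' F) ((fun x => c • x + b) '' P) :=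
  ⟨image_exposed hc b h.1, h.2.1.image _,
    by rw [polyDim_image (ne_of_gt hc) b, polyDim_image (ne_of_gt hc) b]; exact h.2.2⟩

/-! ### membership in the convex hull of a finite range -/

lemma mem_convexHull_range_iff {r : ℕ} {v : Fin r → Fin d → ℝ} {x : Fin d → ℝ} :
    x ∈ convexHull ℝ (Set.range v) ↔
      ∃ lam : Fin r → ℝ, (∀ i, 0 ≤ lam i) ∧ ∑ i, lam i = 1 ∧ ∑ i, lam i • v i = x := by
  classical
  constructor
  · intro hx
    have hsub : convexHull ℝ (Set.range v) ⊆
        {x : Fin d → ℝ | ∃ lam : Fin r → ℝ,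
          (∀ i, 0 ≤ lam i) ∧ ∑ i, lam i = 1 ∧ ∑ i, lam i • v i = x} := by
      apply convexHull_min
      · rintro _ ⟨i, rfl⟩
        refine ⟨fun j => if j = i then 1 else 0, fun j => by simp only []; split <;> norm_num, by simp, ?_⟩
        simp [ite_smul]
      · rintro x ⟨lx, hlx0, hlx1, rfl⟩ y ⟨ly, hly0, hly1, rfl⟩ a b ha hb hab
        refine ⟨fun i => a * lx i + b * ly i, fun i => add_nonneg (mul_nonneg ha (hlx0 i)) (mul_nonneg hb (hly0 i)), ?_, ?_⟩
        · rw [Finset.sum_add_distrib, ← Finset.mul_sum, ← Finset.mul_sum, hlx1, hly1]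
          simpa using hab
        · rw [Finset.smul_sum, Finset.smul_sum, ← Finset.sum_add_distrib]
          refine Finset.sum_congr rfl fun i _ => ?_
          rw [add_smul, smul_smul, smul_smul]
    exact hsub hx
  · rintro ⟨lam, h0, h1, rfl⟩
    exact mem_convexHull_of_exists_fintype lam v h0 h1 (fun i => Set.mem_range_self i) rfl

end SSAux

open SSAux

/-- For a `d`-dimensional Gorenstein polytope `∇` of index `r` with `m`
the unique interior lattice point of `r∇`, and affinely independent lattice points
`n_1, …, n_r` of `∇`: their convex hull is a special `(r-1)`-simplex of `∇` iff it is not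
contained in the boundary of `∇`; and in this case `n_1 + ⋯ + n_r = m`. -/
theorem special_simplex_iff_not_in_boundary {d r : ℕ} (hr : 0 < r)
    (Nb : Set (Fin d → ℝ)) (m : Fin d → ℝ)
    (hG : IsGorensteinPoly Nb r m)
    (hd : polyDim Nb = d)
    (v : Fin r → Fin d → ℝ)
    (hv : ∀ i, IsLatticePt (v i) ∧ v i ∈ Nb)
    (hai : AffineIndependent ℝ v) :
    (IsSpecialSimplex Nb r v ↔ ¬ (convexHull ℝ (Set.range v) ⊆ frontier Nb)) ∧
    (IsSpecialSimplex Nb r v → ∑ i, v i = m) := by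
  classical
  obtain ⟨hNbLat, hmLat, hGint, hRefl⟩ := hG
  set P' : Set (Fin d → ℝ) := (fun x => x - m) '' ((r : ℝ) • Nb) with hP'
  obtain ⟨hP'lat, h0P', hDlat⟩ := hRefl
  set T : (Fin d → ℝ) → (Fin d → ℝ) := fun x => (r : ℝ) • x + (-m) with hT
  have hrR : (0 : ℝ) < r := by exact_mod_cast hr
  have hP'img : P' = T '' Nb := by
    rw [hP', hT]
    ext y
    simp only [Set.mem_image, Set.mem_smul_set]
    constructor
    · rintro ⟨x, ⟨x', hx', rfl⟩, rfl⟩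
      exact ⟨x', hx', by rw [sub_eq_add_neg]⟩
    · rintro ⟨x, hx, rfl⟩
      exact ⟨(r : ℝ) • x, ⟨x, hx, rfl⟩, by rw [sub_eq_add_neg]⟩
  obtain ⟨VNb, hVne, hVlat, hVNb⟩ := hNbLat
  obtain ⟨W, hWne, hWlat, hWP'⟩ := hP'lat
  obtain ⟨U, hUne, hUlat, hUdual⟩ := hDlat
  have hNbconv : Convex ℝ Nb := hVNb ▸ convex_convexHull ℝ _
  have hNbcomp : IsCompact Nb := hVNb ▸ VNb.finite_toSet.isCompact_convexHull ℝ
  have hNbcl : IsClosed Nb := hNbcomp.isClosed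
  have hP'conv : Convex ℝ P' := hWP' ▸ convex_convexHull ℝ _
  have hP'cl : IsClosed P' := hWP' ▸ (W.finite_toSet.isCompact_convexHull ℝ).isClosed
  have h0P : (0 : Fin d → ℝ) ∈ P' := interior_subset h0P'
  have hUsub : ∀ u ∈ U, u ∈ dualPoly P' := fun u hu => hUdual ▸ subset_convexHull ℝ _ hu
  -- description of `P'` by the inequalities from `U`
  have hP'char : P' = {y | ∀ u ∈ U, -1 ≤ pairR y u} := by
    apply Set.Subset.antisymm
    · intro y hy u hu
      exact hUsub u hu y hy
    · intro y hy
      apply bipolar hP'conv hP'cl h0P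
      intro z hz
      rw [hUdual] at hz
      have hconv : Convex ℝ {z : Fin d → ℝ | -1 ≤ pairR y z} := by
        have he : {z : Fin d → ℝ | -1 ≤ pairR y z} = {z | -1 ≤ pairLM y z} := by
          ext z; simp only [Set.mem_setOf_eq, pairLM_apply, pairR_comm y z]
        rw [he]
        exact convex_halfSpace_ge (pairLM y).isLinear (-1)
      exact convexHull_min (fun u hu => hy u hu) hconv hz
  have hIntChar : interior P' = {y | ∀ u ∈ U, -1 < pairR y u} := by
    rw [hP'char, interior_halfspaces]
  -- transfer of membership and interior
  have hTmem : ∀ x ∈ Nb, T x ∈ P' := fun x hx => hP'img ▸ ⟨x, hx, rfl⟩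
  have hTlb : ∀ x ∈ Nb, ∀ u ∈ U, -1 ≤ pairR (T x) u := fun x hx u hu =>
    hUsub u hu _ (hTmem x hx)
  have hint_iff : ∀ x : Fin d → ℝ, x ∈ interior ((r : ℝ) • Nb) ↔ x - m ∈ interior P' := by
    intro x
    have himg : P' = (Homeomorph.subRight m) '' ((r : ℝ) • Nb) := by
      rw [hP']; rfl
    rw [himg, ← Homeomorph.image_interior]
    constructor
    · intro h
      exact ⟨x, h, rfl⟩
    · rintro ⟨x', hx', hxx⟩
      have hxeq : x' = x := by
        have h2 : x' - m = x - m := hxx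
        have := sub_left_injective (G := Fin d → ℝ) (b := m) h2
        exact this
      rwa [← hxeq]
  -- lattice points
  have hlat_T : ∀ i, IsLatticePt (T (v i)) := by
    intro i
    have h1 : IsLatticePt ((r : ℝ) • v i) := latt_nat_smul r (hv i).1
    have h2 := latt_sub h1 hmLat
    have he : (r : ℝ) • v i - m = T (v i) := by rw [hT]; rw [sub_eq_add_neg]
    rwa [he] at h2
  -- sum formula
  have hTsum : ∀ u : Fin d → ℝ, ∑ i, pairR (T (v i)) u
      = (r : ℝ) * pairR ((∑ i, v i) - m) u := by
    intro u
    rw [← pairR_sum_left]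
    have he : ∑ i, T (v i) = (r : ℝ) • ((∑ i, v i) - m) := by
      have h0 : ∀ i : Fin r, T (v i) = (r : ℝ) • v i - m := fun i => by
        rw [hT, sub_eq_add_neg]
      calc ∑ i, T (v i) = ∑ i, ((r : ℝ) • v i - m) := Finset.sum_congr rfl fun i _ => h0 i
        _ = ∑ i, (r : ℝ) • v i - (r : ℕ) • m := by
            rw [Finset.sum_sub_distrib, Finset.sum_const, Finset.card_univ, Fintype.card_fin]
        _ = (r : ℝ) • (∑ i, v i) - (r : ℝ) • m := by
            rw [← Finset.smul_sum, ← Nat.cast_smul_eq_nsmul ℝ r m]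
        _ = (r : ℝ) • ((∑ i, v i) - m) := by rw [smul_sub]
    rw [he, pairR_smul_left]
  -- KEY 1 : if for each u some coordinate is not tight then the sum is the interior point
  have sum_eq_m : (∀ u ∈ U, ∃ i, pairR (T (v i)) u ≠ -1) → ∑ i, v i = m := by
    intro hU'
    have hx : (∑ i, v i) - m ∈ interior P' := by
      rw [hIntChar]
      intro u hu
      obtain ⟨i₀, hi₀⟩ := hU' u hu
      have hlb : ∀ i, -1 ≤ pairR (T (v i)) u := fun i => hTlb _ (hv i).2 u hu
      have hi₀' : 0 ≤ pairR (T (v i₀)) u := by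
        obtain ⟨k, hk⟩ := latt_pairR_int (hlat_T i₀) (hUlat u hu)
        rw [hk]
        rw [hk] at hi₀
        have h1 : (-1 : ℝ) < (k : ℝ) := lt_of_le_of_ne (by rw [← hk]; exact hlb i₀)
          (by intro h; exact hi₀ h.symm)
        have h2 : (-1 : ℤ) < k := by exact_mod_cast h1
        have h3 : (0 : ℤ) ≤ k := by omega
        exact_mod_cast h3
      have hsumlt : -(r : ℝ) < ∑ i, pairR (T (v i)) u := by
        have h1 : ∑ _i : Fin r, (-1 : ℝ) < ∑ i, pairR (T (v i)) u :=
          Finset.sum_lt_sum (fun i _ => hlb i)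
            ⟨i₀, Finset.mem_univ _, by linarith [hi₀']⟩
        rw [Finset.sum_const, Finset.card_univ, Fintype.card_fin] at h1
        have h2 : (r : ℕ) • (-1 : ℝ) = -(r : ℝ) := by
          rw [nsmul_eq_mul]; ring
        rwa [h2] at h1
      rw [hTsum u] at hsumlt
      show -1 < pairR ((∑ i, v i) - m) u
      nlinarith
    have hxi : (∑ i, v i) ∈ interior ((r : ℝ) • Nb) := (hint_iff _).2 hx
    exact (hGint _ (latt_sum fun i => (hv i).1)).1 hxi
  have hdimP' : polyDim P' = d := by
    rw [hP'img, hT, polyDim_image (ne_of_gt hrR) (-m), hd]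
  -- KEY 2 : speciality from the sum identity
  have special_of_sum : (∑ i, v i = m) → ∀ F, IsFacetOf F Nb → ∃! i, v i ∉ F := by
    intro hsum F hF
    obtain ⟨hFexp, hFne, hFdim⟩ := hF
    have hF'facet : IsFacetOf (T '' F) P' := by
      rw [hP'img, hT]
      exact image_facet hrR (-m) ⟨hFexp, hFne, hFdim⟩
    obtain ⟨u₀, hu₀U, hF'eq⟩ := facet_has_lattice_normal hUdual h0P' hF'facet.1
      (hFne.image T) (by rw [hF'facet.2.2, hdimP']) hdimP'
    have hTinj : Function.Injective T := by
      intro x y hxy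
      rw [hT] at hxy
      simp only [add_left_inj] at hxy
      exact smul_right_injective _ (ne_of_gt hrR) hxy
    have hmemF : ∀ x ∈ Nb, (x ∈ F ↔ pairR (T x) u₀ = -1) := by
      intro x hx
      constructor
      · intro hxF
        have h1 : T x ∈ T '' F := ⟨x, hxF, rfl⟩
        rw [hF'eq] at h1
        exact h1.2
      · intro hpx
        have h1 : T x ∈ T '' F := by
          rw [hF'eq]
          exact ⟨hTmem x hx, hpx⟩
        obtain ⟨x', hx'F, hx'⟩ := h1
        rwa [← hTinj hx']
    -- a lattice point of the facet
    obtain ⟨x₀, hx₀F, hx₀lat⟩ : ∃ x₀ ∈ F, IsLatticePt x₀ := by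
      have hFcl : IsClosed F := hFexp.isClosed hNbcl
      have hFcomp : IsCompact F := hNbcomp.of_isClosed_subset hFcl hFexp.subset
      obtain ⟨x₀, hx₀⟩ := hFcomp.extremePoints_nonempty hFne
      have h1 : x₀ ∈ Nb.extremePoints ℝ :=
        hFexp.isExtreme.extremePoints_subset_extremePoints hx₀
      have h2 : x₀ ∈ (VNb : Set (Fin d → ℝ)) := by
        rw [hVNb] at h1
        exact extremePoints_convexHull_subset h1
      exact ⟨x₀, hx₀.1, hVlat x₀ h2⟩
    have hx₀Nb : x₀ ∈ Nb := hFexp.subset hx₀F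
    obtain ⟨κ, hκ⟩ : ∃ κ : Fin r → ℤ, ∀ i, pairR (v i) u₀ = (κ i : ℝ) := by
      choose κ hκ using fun i => latt_pairR_int (hv i).1 (hUlat u₀ hu₀U)
      exact ⟨κ, hκ⟩
    obtain ⟨β, hβ⟩ := latt_pairR_int hx₀lat (hUlat u₀ hu₀U)
    obtain ⟨M, hM⟩ := latt_pairR_int hmLat (hUlat u₀ hu₀U)
    have hx₀eq : (r : ℤ) * β - M = -1 := by
      have h1 := (hmemF x₀ hx₀Nb).1 hx₀F
      rw [hT] at h1
      rw [pairR_add_left, pairR_smul_left, pairR_neg_left, hβ, hM] at h1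
      exact_mod_cast h1
    set ci : Fin r → ℤ := fun i => κ i - β with hci
    have hMeq : M = (r : ℤ) * β + 1 := by omega
    have hai' : ∀ i, pairR (T (v i)) u₀ = (((r : ℤ) * ci i - 1 : ℤ) : ℝ) := by
      intro i
      rw [hT]
      rw [pairR_add_left, pairR_smul_left, pairR_neg_left, hκ i, hM, hMeq, hci]
      push_cast
      ring
    have hc0 : ∀ i, 0 ≤ ci i := by
      intro i
      have h1 := hTlb _ (hv i).2 u₀ hu₀U
      rw [hai' i] at h1
      have h2 : (-1 : ℤ) ≤ (r : ℤ) * ci i - 1 := by exact_mod_cast h1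
      by_contra hcon
      push_neg at hcon
      have h3 : ci i ≤ -1 := by omega
      have h4 : (r : ℤ) * ci i ≤ (r : ℤ) * (-1) :=
        mul_le_mul_of_nonneg_left h3 (by exact_mod_cast Nat.zero_le r)
      have h5 : (1 : ℤ) ≤ (r : ℤ) := by exact_mod_cast hr
      omega
    have hsumci : ∑ i, ci i = 1 := by
      have h1 : ∑ i, pairR (T (v i)) u₀ = 0 := by
        rw [hTsum u₀, hsum, sub_self, pairR_zero_left, mul_zero]
      have h2 : ((∑ i, ((r : ℤ) * ci i - 1) : ℤ) : ℝ) = 0 := by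
        rw [← h1]
        push_cast
        exact Finset.sum_congr rfl fun i _ => by rw [hai' i]; push_cast; ring
      have h3 : (∑ i, ((r : ℤ) * ci i - 1) : ℤ) = 0 := by exact_mod_cast h2
      rw [Finset.sum_sub_distrib, ← Finset.mul_sum, Finset.sum_const, Finset.card_univ,
        Fintype.card_fin, nsmul_eq_mul, mul_one] at h3
      have hrz : (r : ℤ) ≠ 0 := by exact_mod_cast hr.ne'
      have h4 : (r : ℤ) * (∑ i, ci i) = (r : ℤ) * 1 := by rw [mul_one]; linarith [h3]
      exact mul_left_cancel₀ hrz h4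
    have hiff : ∀ i, (v i ∉ F ↔ ci i ≠ 0) := by
      intro i
      rw [hmemF (v i) (hv i).2, hai' i]
      constructor
      · intro h
        intro hci0
        apply h
        rw [hci0]
        norm_num
      · intro h hc
        apply h
        have h2 : (r : ℤ) * ci i - 1 = -1 := by exact_mod_cast hc
        have hrz : (r : ℤ) ≠ 0 := by exact_mod_cast hr.ne'
        have h3 : (r : ℤ) * ci i = 0 := by omega
        rcases mul_eq_zero.1 h3 with h4 | h4
        · exact absurd h4 hrz
        · exact h4
    obtain ⟨i₁, hi₁⟩ : ∃ i, ci i ≠ 0 := by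
      by_contra h
      push_neg at h
      rw [Finset.sum_eq_zero fun i _ => h i] at hsumci
      norm_num at hsumci
    refine ⟨i₁, (hiff i₁).2 hi₁, ?_⟩
    intro j hj
    have hj' := (hiff j).1 hj
    by_contra hne
    have h1 : (1 : ℤ) ≤ ci i₁ := by have := hc0 i₁; omega
    have h2 : (1 : ℤ) ≤ ci j := by have := hc0 j; omega
    have h3 : ci j + ci i₁ ≤ ∑ i, ci i := by
      have h4 := Finset.sum_le_sum_of_subset_of_nonneg
        (Finset.subset_univ ({j, i₁} : Finset (Fin r))) (fun i _ _ => hc0 i)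
      rwa [Finset.sum_pair hne] at h4
    omega
  -- KEY 3 : a special simplex is not contained in any tight hyperplane
  have hyp_of_special : (∀ F, IsFacetOf F Nb → ∃! i, v i ∉ F) →
      ∀ u ∈ U, ∃ i, pairR (T (v i)) u ≠ -1 := by
    intro hsp u hu
    by_contra hcon
    push_neg at hcon
    set G' : Set (Fin d → ℝ) := {y ∈ P' | pairR y u = -1} with hG'
    have i₀ : Fin r := ⟨0, hr⟩
    have hvT : ∀ i, T (v i) ∈ G' := fun i => ⟨hTmem _ (hv i).2, hcon i⟩
    have hG'ne : G'.Nonempty := ⟨T (v i₀), hvT i₀⟩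
    have hG'P : G' ≠ P' := by
      intro he
      have h0G : (0 : Fin d → ℝ) ∈ G' := by rw [he]; exact h0P
      have h1 := h0G.2
      rw [pairR_zero_left] at h1
      norm_num at h1
    have hG'exp : IsExposed ℝ P' G' :=
      tight_isExposed (fun y hy => hUsub u hu y hy) (hvT i₀).1 (hvT i₀).2
    obtain ⟨F', hF'facet, hGF'⟩ :=
      exposed_subset_facet hWP' hUdual h0P' hdimP' hG'exp hG'ne hG'P
    set Tinv : (Fin d → ℝ) → (Fin d → ℝ) :=
      fun y => (r : ℝ)⁻¹ • y + (r : ℝ)⁻¹ • m with hTinv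
    have hTinvT : ∀ x, Tinv (T x) = x := by
      intro x
      rw [hT, hTinv]
      simp only [smul_add, smul_smul, smul_neg]
      rw [inv_mul_cancel₀ (ne_of_gt hrR), one_smul]
      abel
    have hNbimg : Nb = Tinv '' P' := by
      rw [hP'img, ← Set.image_comp]
      have hco : Tinv ∘ T = id := funext hTinvT
      rw [hco, Set.image_id]
    have hFNb : IsFacetOf (Tinv '' F') Nb := by
      rw [hNbimg, hTinv]
      exact image_facet (by positivity) _ hF'facet
    obtain ⟨i, hi, -⟩ := hsp _ hFNb
    exact hi ⟨T (v i), hGF' (hvT i), hTinvT (v i)⟩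
  have hconv_sub : convexHull ℝ (Set.range v) ⊆ Nb :=
    convexHull_min (by rintro _ ⟨i, rfl⟩; exact (hv i).2) hNbconv
  -- assembling
  have main2 : IsSpecialSimplex Nb r v → ∑ i, v i = m := by
    intro hsp
    exact sum_eq_m (hyp_of_special hsp.2.2)
  refine ⟨⟨?_, ?_⟩, main2⟩
  · intro hsp hsub
    have hsum := main2 hsp
    have hmint : m ∈ interior ((r : ℝ) • Nb) := (hGint m hmLat).2 rfl
    rw [interior_smul₀ (ne_of_gt hrR) Nb] at hmint
    obtain ⟨p, hp, hpm⟩ := hmint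
    have hpconv : p ∈ convexHull ℝ (Set.range v) := by
      rw [mem_convexHull_range_iff]
      refine ⟨fun _ => (r : ℝ)⁻¹, fun _ => by positivity, ?_, ?_⟩
      · rw [Finset.sum_const, Finset.card_univ, Fintype.card_fin, nsmul_eq_mul,
          mul_inv_cancel₀ (ne_of_gt hrR)]
      · rw [← Finset.smul_sum, hsum, ← hpm, smul_smul, inv_mul_cancel₀ (ne_of_gt hrR), one_smul]
    have hfr := hsub hpconv
    exact hfr.2 hp
  · intro hnsub
    obtain ⟨p, hpconv, hpfr⟩ := Set.not_subset.1 hnsub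
    have hpNb : p ∈ Nb := hconv_sub hpconv
    have hpint : p ∈ interior Nb := by
      by_contra h
      exact hpfr (by rw [hNbcl.frontier_eq]; exact ⟨hpNb, h⟩)
    obtain ⟨lam, hlam0, hlam1, hlameq⟩ := mem_convexHull_range_iff.1 hpconv
    have hypU : ∀ u ∈ U, ∃ i, pairR (T (v i)) u ≠ -1 := by
      intro u hu
      by_contra hcon
      push_neg at hcon
      have hTp : T p ∈ interior P' := by
        have h1 : (r : ℝ) • p ∈ interior ((r : ℝ) • Nb) := by
          rw [interior_smul₀ (ne_of_gt hrR)]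
          exact Set.smul_mem_smul_set hpint
        have h2 := (hint_iff _).1 h1
        rw [hT]
        rw [sub_eq_add_neg] at h2
        exact h2
      rw [hIntChar] at hTp
      have h2 := hTp u hu
      have h3 : pairR (T p) u = -1 := by
        have hTpsum : T p = ∑ i, lam i • T (v i) := by
          rw [hT]
          have he : ∑ i, lam i • ((r : ℝ) • v i + (-m)) =
              (r : ℝ) • (∑ i, lam i • v i) + (∑ i, lam i) • (-m) := by
            rw [Finset.smul_sum, Finset.sum_smul, ← Finset.sum_add_distrib]
            refine Finset.sum_congr rfl fun i _ => ?_
            rw [smul_add, smul_smul, smul_smul, mul_comm]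
          rw [he, hlameq, hlam1, one_smul]
        rw [hTpsum, pairR_sum_left]
        have he2 : ∀ i, pairR (lam i • T (v i)) u = lam i * (-1) := fun i => by
          rw [pairR_smul_left, hcon i]
        rw [Finset.sum_congr rfl fun i _ => he2 i, ← Finset.sum_mul, hlam1, one_mul]
      linarith
    have hsum := sum_eq_m hypU
    exact ⟨hv, hai, special_of_sum hsum⟩
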